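/- Let g ≥ 4. Every subgroup H of ℤ/2ℤ × S_g that contains {0} × S_{g-1} and contains neither {0} × S_g nor ℤ/2ℤ × {1} as a subgroup (i.e., H does not contain (1, id) and does not contain all of {0} × S_g) must equal {0} × S_{g-1}. -/

import Mathlib

/-- Let `g ≥ 4`. Every subgroup `H` of `ℤ/2ℤ × S_g` that contains
`{0} × S_{g-1}` (with `S_{g-1}` the stabilizer of a point) and contains neither `(1, id)`
nor all of `{0} × S_g` must equal `{0} × S_{g-1}`. -/
theorem stmt6 (g : ℕ) (hg : 4 ≤ g)
    (H : Subgroup (Multiplicative (ZMod 2) × Equiv.Perm (Fin g)))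
    (hsub : ∀ σ : Equiv.Perm (Fin g), σ ⟨0, by omega⟩ = ⟨0, by omega⟩ →
      ((1 : Multiplicative (ZMod 2)), σ) ∈ H)
    (hτ : ((Multiplicative.ofAdd (1 : ZMod 2)), (1 : Equiv.Perm (Fin g))) ∉ H)
    (hSg : ¬ ∀ σ : Equiv.Perm (Fin g), ((1 : Multiplicative (ZMod 2)), σ) ∈ H) :
    ∀ x : Multiplicative (ZMod 2) × Equiv.Perm (Fin g),
      x ∈ H ↔ (x.1 = 1 ∧ x.2 ⟨0, by omega⟩ = ⟨0, by omega⟩) := by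
  set z : Fin g := ⟨0, by omega⟩ with hzdef
  -- Claim: any (1, π) ∈ H has π z = z
  have hC : ∀ π : Equiv.Perm (Fin g), ((1 : Multiplicative (ZMod 2)), π) ∈ H → π z = z := by
    intro π hπ
    by_contra hb
    apply hSg
    have key : ∀ c : Fin g, ∃ κ : Equiv.Perm (Fin g),
        ((1 : Multiplicative (ZMod 2)), κ) ∈ H ∧ κ z = c := by
      intro c
      by_cases hc : c = z
      · exact ⟨1, hsub 1 rfl, by simp [hc]⟩
      · have ht : ((1 : Multiplicative (ZMod 2)), Equiv.swap (π z) c) ∈ H :=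
          hsub _ (Equiv.swap_apply_of_ne_of_ne (Ne.symm hb) (Ne.symm hc))
        refine ⟨Equiv.swap (π z) c * π, ?_, ?_⟩
        · simpa using H.mul_mem ht hπ
        · simp [Equiv.Perm.mul_apply]
    intro σ
    obtain ⟨κ, hκ, hκz⟩ := key (σ z)
    have h2 : ((1 : Multiplicative (ZMod 2)), κ⁻¹ * σ) ∈ H := by
      apply hsub
      rw [Equiv.Perm.mul_apply, ← hκz, Equiv.Perm.inv_def, Equiv.symm_apply_apply]
    have := H.mul_mem hκ h2
    simpa [mul_inv_cancel_left] using this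
  rintro ⟨a, σ⟩
  constructor
  · intro hx
    have ha : ∀ b : Multiplicative (ZMod 2), b = 1 ∨ b = Multiplicative.ofAdd 1 := by decide
    rcases ha a with rfl | rfl
    · exact ⟨rfl, hC σ hx⟩
    · exfalso
      by_cases hσ : σ z = z
      · apply hτ
        have h1 : ((1 : Multiplicative (ZMod 2)), σ⁻¹) ∈ H := by
          apply hsub
          rw [← hσ, Equiv.Perm.inv_def, Equiv.symm_apply_apply]
          exact hσ.symm
        have := H.mul_mem hx h1
        simpa using this
      · obtain ⟨c, hcz, hcb⟩ : ∃ c : Fin g, c ≠ z ∧ c ≠ σ z := by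
          by_cases h1 : σ z = ⟨1, by omega⟩
          · refine ⟨⟨2, by omega⟩, ?_, ?_⟩ <;> simp only [hzdef] at h1 ⊢ <;> simp [h1, Fin.ext_iff]
          · exact ⟨⟨1, by omega⟩, by simp [hzdef, Fin.ext_iff], fun h => h1 h.symm⟩
        have ht : ((1 : Multiplicative (ZMod 2)), Equiv.swap (σ z) c) ∈ H :=
          hsub _ (Equiv.swap_apply_of_ne_of_ne (fun h => hσ h.symm) (Ne.symm hcz))
        have hmem := H.mul_mem (H.mul_mem (H.inv_mem hx) ht) hx
        have heq : ((Multiplicative.ofAdd (1 : ZMod 2)), σ)⁻¹ *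
            ((1 : Multiplicative (ZMod 2)), Equiv.swap (σ z) c) *
            ((Multiplicative.ofAdd (1 : ZMod 2)), σ)
            = ((1 : Multiplicative (ZMod 2)), σ⁻¹ * Equiv.swap (σ z) c * σ) := by
          refine Prod.ext ?_ rfl
          simp
        rw [heq] at hmem
        have := hC _ hmem
        rw [Equiv.Perm.mul_apply, Equiv.Perm.mul_apply] at this
        have h3 : Equiv.swap (σ z) c (σ z) = σ z := by
          have := congrArg σ this
          simpa using this
        rw [Equiv.swap_apply_left] at h3
        exact hcb h3
  · rintro ⟨h1, h2⟩
    simp only at h1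
    subst h1
    exact hsub σ h2
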